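/- Let G and H be finite simple graphs with the same number of vertices such that s(G) = s(H). Then G and H have the same Tutte polynomial, i.e., for all real numbers x and y, Σ_{F ⊆ E(G)} (x−1)^{c_G(F)−c_G(E(G))}·(y−1)^{c_G(F)+|F|−|V(G)|} = Σ_{F ⊆ E(H)} (x−1)^{c_H(F)−c_H(E(H))}·(y−1)^{c_H(F)+|F|−|V(H)|}. -/

import Mathlib

open SimpleGraph

open scoped Classical

/-- The multiset of orders of the connected components of a graph. -/

noncomputable def componentOrders {V : Type*} [Fintype V] (G' : SimpleGraph V) : Multiset ℕ :=
  ((Finset.univ.val.map fun v => G'.connectedComponentMk v).dedup).map fun c => Nat.card c.supp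

/-- The subgraph sequence `s(G)`: the multiset, over all edge subsets `F ⊆ E(G)`, of the
subgraph descriptions `(|F|, multiset of orders of connected components of (V, F))`. -/

noncomputable def subgraphSeq {V : Type*} [Fintype V] (G : SimpleGraph V) :
    Multiset (ℕ × Multiset ℕ) :=
  G.edgeFinset.powerset.val.map fun (F : Finset (Sym2 V)) =>
    (F.card, componentOrders (SimpleGraph.fromEdgeSet (F : Set (Sym2 V))))

/-- `c(F)`: the number of connected components of the spanning subgraph `(V, F)`. -/

noncomputable def numComponents {V : Type*} [Fintype V] (F : Finset (Sym2 V)) : ℕ :=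
  Nat.card (SimpleGraph.fromEdgeSet (F : Set (Sym2 V))).ConnectedComponent

/-- The Tutte polynomial of `G`, evaluated at `(x, y)`:
`T_G(x,y) = Σ_{F ⊆ E(G)} (x−1)^(c(F)−c(E)) * (y−1)^(c(F)+|F|−|V|)`. -/

noncomputable def tutte {V : Type*} [Fintype V] (G : SimpleGraph V) (x y : ℝ) : ℝ :=
  ∑ F ∈ G.edgeFinset.powerset,
    (x - 1) ^ (numComponents F - numComponents G.edgeFinset) *
      (y - 1) ^ (numComponents F + F.card - Fintype.card V)

lemma card_componentOrders {V : Type*} [Fintype V] (G' : SimpleGraph V) :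
    (componentOrders G').card = Nat.card G'.ConnectedComponent := by
  classical
  unfold componentOrders
  rw [Multiset.card_map]
  have : (Finset.univ.val.map fun v => G'.connectedComponentMk v).dedup
      = (Finset.univ.image fun v => G'.connectedComponentMk v).val := rfl
  rw [this]
  have hsurj : Function.Surjective (fun v => G'.connectedComponentMk v) :=
    fun c => c.exists_rep
  rw [show (Finset.univ.image fun v => G'.connectedComponentMk v) = Finset.univ from
    Finset.image_univ_of_surjective hsurj]
  simp [Nat.card_eq_fintype_card, Finset.card_univ]

lemma numComponents_eq {V : Type*} [Fintype V] (F : Finset (Sym2 V)) :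
    numComponents F = (componentOrders (SimpleGraph.fromEdgeSet (F : Set (Sym2 V)))).card := by
  rw [card_componentOrders]; rfl

lemma fst_sup {V : Type*} [Fintype V] (G : SimpleGraph V) :
    ((subgraphSeq G).map Prod.fst).sup = G.edgeFinset.card := by
  apply le_antisymm
  · rw [Multiset.sup_le]
    intro b hb
    rw [subgraphSeq, Multiset.map_map, Multiset.mem_map] at hb
    obtain ⟨F, hF, hb⟩ := hb
    rw [← hb]
    exact Finset.card_le_card (Finset.mem_powerset.mp (by simpa using hF))
  · apply Multiset.le_sup
    rw [subgraphSeq, Multiset.map_map, Multiset.mem_map]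
    exact ⟨G.edgeFinset, by simp [Finset.mem_powerset], rfl⟩

lemma comp_full {V : Type*} [Fintype V] (G : SimpleGraph V) :
    ((subgraphSeq G).map fun p => if p.1 = G.edgeFinset.card then p.2.card else 0).sum
      = numComponents G.edgeFinset := by
  rw [subgraphSeq, Multiset.map_map]
  have : ((G.edgeFinset.powerset.val).map
      ((fun p : ℕ × Multiset ℕ => if p.1 = G.edgeFinset.card then p.2.card else 0) ∘
        fun (F : Finset (Sym2 V)) => (F.card, componentOrders (SimpleGraph.fromEdgeSet (F : Set (Sym2 V)))))).sum
      = ∑ F ∈ G.edgeFinset.powerset,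
        (if F.card = G.edgeFinset.card then
          (componentOrders (SimpleGraph.fromEdgeSet (F : Set (Sym2 V)))).card else 0) := rfl
  rw [this, Finset.sum_eq_single G.edgeFinset]
  · rw [if_pos rfl, ← numComponents_eq]
  · intro F hF hne
    rw [if_neg]
    intro hcard
    exact hne (Finset.eq_of_subset_of_card_le (Finset.mem_powerset.mp hF) hcard.ge)
  · intro habs; exact absurd (Finset.mem_powerset.mpr le_rfl) habs

lemma tutte_eq_multiset {V : Type*} [Fintype V] (G : SimpleGraph V) (x y : ℝ) (cE n : ℕ)
    (hcE : numComponents G.edgeFinset = cE) (hn : Fintype.card V = n) :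
    tutte G x y = ((subgraphSeq G).map fun p =>
      (x - 1) ^ (p.2.card - cE) * (y - 1) ^ (p.2.card + p.1 - n)).sum := by
  rw [subgraphSeq, Multiset.map_map, _root_.tutte]
  have : ∑ F ∈ G.edgeFinset.powerset,
      (x - 1) ^ (numComponents F - numComponents G.edgeFinset) *
        (y - 1) ^ (numComponents F + F.card - Fintype.card V)
      = (G.edgeFinset.powerset.val.map fun F =>
        (x - 1) ^ (numComponents F - numComponents G.edgeFinset) *
          (y - 1) ^ (numComponents F + F.card - Fintype.card V)).sum := rfl
  rw [this]
  congr 1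
  apply Multiset.map_congr rfl
  intro F _
  simp only [Function.comp_apply, ← numComponents_eq, hcE, hn]

/-- Two graphs with the same number of vertices and the same subgraph sequence have the
same Tutte polynomial. -/
theorem stmt_7 {V W : Type*} [Fintype V] [Fintype W]
    (G : SimpleGraph V) (H : SimpleGraph W)
    (hcard : Fintype.card V = Fintype.card W)
    (h : subgraphSeq G = subgraphSeq H) :
    ∀ x y : ℝ, tutte G x y = tutte H x y := by
  intro x y
  have hE : G.edgeFinset.card = H.edgeFinset.card := by
    rw [← fst_sup G, ← fst_sup H, h]
  have hc : numComponents G.edgeFinset = numComponents H.edgeFinset := by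
    rw [← comp_full G, ← comp_full H, h, hE]
  rw [tutte_eq_multiset G x y (numComponents H.edgeFinset) (Fintype.card W) hc hcard,
    tutte_eq_multiset H x y (numComponents H.edgeFinset) (Fintype.card W) rfl rfl, h]
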